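/- Let λ be an affine k-stress on a simplicial d-polytope P and let F be a (k−2)-face of ∂P. If λ_G ≥ 0 for every (k−1)-face G ⊃ F, then λ_G = 0 for every (k−1)-face G ⊃ F. -/

import Mathlib

open scoped Classical

noncomputable section

/-- The body of the polytope with vertex embedding `p`. -/
def body {V : Type} [Fintype V] {d : ℕ} (p : V → EuclideanSpace ℝ (Fin d)) :
    Set (EuclideanSpace ℝ (Fin d)) :=
  convexHull ℝ (Set.range p)

/-- A finite vertex set `F` spans a proper (exposed) face of the polytope. -/
def IsBdryFace {V : Type} [Fintype V] {d : ℕ} (p : V → EuclideanSpace ℝ (Fin d))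
    (F : Finset V) : Prop :=
  IsExposed ℝ (body p) (convexHull ℝ (p '' (F : Set V))) ∧
    convexHull ℝ (p '' (F : Set V)) ≠ body p

/-- `p` is the vertex embedding of a simplicial `d`-polytope: the points are distinct
extreme points, they affinely span `ℝ^d`, and every proper exposed face is the convex hull
of an affinely independent set of vertices (a geometric simplex). -/
structure IsSimplicialPolytope {V : Type} [Fintype V] {d : ℕ}
    (p : V → EuclideanSpace ℝ (Fin d)) : Prop where
  inj : Function.Injective p
  spans : affineSpan ℝ (Set.range p) = ⊤
  vertex : ∀ v, p v ∈ Set.extremePoints ℝ (body p)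
  simplicial : ∀ F : Set (EuclideanSpace ℝ (Fin d)), IsExposed ℝ (body p) F →
    F ≠ body p → ∃ W : Finset V,
      AffineIndependent ℝ (fun w : (W : Set V) => p w) ∧ F = convexHull ℝ (p '' W)

/-- The graph of the polytope: two vertices are adjacent iff they span a proper face. -/
def polyGraph {V : Type} [Fintype V] {d : ℕ} (p : V → EuclideanSpace ℝ (Fin d)) :
    SimpleGraph V where
  Adj a b := a ≠ b ∧ IsBdryFace p {a, b}
  symm := by
    constructor
    intro a b h
    exact ⟨h.1.symm, by rw [Finset.pair_comm]; exact h.2⟩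
  loopless := by constructor; intro a h; exact h.1 rfl
open scoped RealInnerProductSpace

/-- `π` is the altitude vector `π_{F,G}` for `G = F ∪ {v}`: it joins the orthogonal
projection of `p v` onto the affine hull of `p(F)` to `p v`, i.e. `p v − π` lies in
`Aff(p F)` and `π` is orthogonal to the direction of `Aff(p F)`. -/
def IsAltitude {V : Type} [Fintype V] {d : ℕ} (p : V → EuclideanSpace ℝ (Fin d))
    (F : Finset V) (v : V) (π : EuclideanSpace ℝ (Fin d)) : Prop :=
  p v - π ∈ (affineSpan ℝ (p '' (F : Set V)) : Set (EuclideanSpace ℝ (Fin d))) ∧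
  ∀ w ∈ vectorSpan ℝ (p '' (F : Set V)), ⟪π, w⟫ = 0

/-- The coefficient system `lam` on `(k−1)`-faces satisfies the balancing condition of an
affine `k`-stress at every `(k−2)`-face `F` of `∂P`, with respect to the altitude vectors
`π`. -/
def IsBalancedStress {V : Type} [Fintype V] {d : ℕ} (p : V → EuclideanSpace ℝ (Fin d))
    (π : Finset V → V → EuclideanSpace ℝ (Fin d)) (k : ℕ) (lam : Finset V → ℝ) : Prop :=
  (∀ G : Finset V, ¬ IsBdryFace p G → lam G = 0) ∧
  ∀ F : Finset V, F.card = k - 1 → IsBdryFace p F →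
    ∑ v ∈ Finset.univ.filter
        (fun v => v ∉ F ∧ IsBdryFace p (insert v F)),
      lam (insert v F) • π F v = 0
/-- if `λ` is an affine `k`-stress on a simplicial `d`-polytope `P` and `F`
is a `(k−2)`-face of `∂P` such that `λ_G ≥ 0` for every `(k−1)`-face `G ⊇ F`, then
`λ_G = 0` for every such face. -/
theorem stmt13 {V : Type} [Fintype V] {d k : ℕ} (hk : 2 ≤ k)
    (p : V → EuclideanSpace ℝ (Fin d)) (hP : IsSimplicialPolytope p)
    (π : Finset V → V → EuclideanSpace ℝ (Fin d))
    (hπ : ∀ (G : Finset V) (v : V), v ∉ G → IsBdryFace p G →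
      IsBdryFace p (insert v G) → IsAltitude p G v (π G v))
    (lam : Finset V → ℝ) (hbal : IsBalancedStress p π k lam)
    (F : Finset V) (hFcard : F.card = k - 1) (hFface : IsBdryFace p F)
    (hsign : ∀ v : V, v ∉ F → IsBdryFace p (insert v F) → 0 ≤ lam (insert v F)) :
    ∀ v : V, v ∉ F → IsBdryFace p (insert v F) → lam (insert v F) = 0 := by
  classical
  obtain ⟨hexp, hne⟩ := hFface
  have hFne : ((p '' (F : Set V))).Nonempty := by
    have : F.Nonempty := Finset.card_pos.mp (by omega)
    exact (this.to_set).image p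
  have hfacene : (convexHull ℝ (p '' (F : Set V))).Nonempty :=
    hFne.mono (subset_convexHull ℝ _)
  obtain ⟨l, hl⟩ := hexp hfacene
  obtain ⟨x₀, hx₀⟩ := hfacene
  have hx₀' := hx₀
  rw [hl] at hx₀'
  obtain ⟨hx₀A, hx₀max⟩ := hx₀'
  set α : ℝ := l x₀ with hα
  -- the face is contained in the body
  have hsub : convexHull ℝ (p '' (F : Set V)) ⊆ body p :=
    convexHull_mono (Set.image_subset_range p _)
  -- l is constantly α on the face
  have hconst : ∀ x ∈ convexHull ℝ (p '' (F : Set V)), l x = α := by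
    intro x hx
    have hx' := hx
    rw [hl] at hx'
    exact le_antisymm (hx₀max x hx'.1) (hx'.2 x₀ hx₀A)
  -- l is constantly α on the affine span of p '' F
  have hspan : ∀ x ∈ (affineSpan ℝ (p '' (F : Set V)) :
      Set (EuclideanSpace ℝ (Fin d))), l x = α := by
    have hvec : ∀ w ∈ vectorSpan ℝ (p '' (F : Set V)), l w = 0 := by
      intro w hw
      rw [vectorSpan_def] at hw
      induction hw using Submodule.span_induction with
      | mem z hz =>
        obtain ⟨a, ha, b, hb, rfl⟩ := hz
        have ha' := hconst a (subset_convexHull ℝ _ ha)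
        have hb' := hconst b (subset_convexHull ℝ _ hb)
        simp [vsub_eq_sub, map_sub, ha', hb']
      | zero => simp
      | add y z _ _ hy hz => simp [map_add, hy, hz]
      | smul c y _ hy => simp [map_smul, hy]
    intro x hx
    have hx₀mem : x₀ ∈ affineSpan ℝ (p '' (F : Set V)) :=
      convexHull_subset_affineSpan _ hx₀
    have hdiff : x -ᵥ x₀ ∈ (affineSpan ℝ (p '' (F : Set V))).direction :=
      AffineSubspace.vsub_mem_direction hx hx₀mem
    rw [direction_affineSpan] at hdiff
    have := hvec _ hdiff
    have : l (x - x₀) = 0 := this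
    have hx' : l x = l x₀ := by
      have := map_sub l x x₀
      rw [this] at *
      linarith [map_sub l x x₀, this]
    simpa [hα] using hx'
  -- each relevant vertex has l (p w) < α, hence l (π F w) < 0
  have hkey : ∀ w : V, w ∉ F → IsBdryFace p (insert w F) → l (π F w) < 0 := by
    intro w hw hwF
    have hpw_body : p w ∈ body p := subset_convexHull ℝ _ (Set.mem_range_self w)
    have hpw_notface : p w ∉ convexHull ℝ (p '' (F : Set V)) := by
      intro hmem
      have hext : p w ∈ (convexHull ℝ (p '' (F : Set V))).extremePoints ℝ :=
        inter_extremePoints_subset_extremePoints_of_subset hsub ⟨hmem, hP.vertex w⟩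
      have : p w ∈ p '' (F : Set V) := extremePoints_convexHull_subset hext
      obtain ⟨u, hu, hu'⟩ := this
      exact hw (by rwa [hP.inj hu'] at hu)
    have hlt : l (p w) < α := by
      have : p w ∉ { x ∈ body p | ∀ y ∈ body p, l y ≤ l x } := by
        rwa [← hl]
      simp only [Set.mem_setOf_eq, hpw_body, true_and, not_forall] at this
      obtain ⟨y, hy, hy'⟩ := this
      push_neg at hy'
      exact lt_of_lt_of_le hy' (hx₀max y hy)
    have halt := hπ F w hw ⟨hexp, hne⟩ hwF
    have h1 : l (p w - π F w) = α := hspan _ halt.1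
    have : l (π F w) = l (p w) - α := by
      have := map_sub l (p w) (π F w)
      rw [this] at h1; linarith
    linarith
  -- now use the balancing condition
  intro v hv hvF
  have hbalF := hbal.2 F hFcard ⟨hexp, hne⟩
  have hsum : ∑ w ∈ Finset.univ.filter
      (fun w => w ∉ F ∧ IsBdryFace p (insert w F)),
      lam (insert w F) * l (π F w) = 0 := by
    have := congrArg l hbalF
    rw [map_sum] at this
    simpa [map_smul, smul_eq_mul] using this
  have hterm : ∀ w ∈ Finset.univ.filter
      (fun w => w ∉ F ∧ IsBdryFace p (insert w F)),
      lam (insert w F) * l (π F w) ≤ 0 := by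
    intro w hw
    simp only [Finset.mem_filter] at hw
    exact mul_nonpos_of_nonneg_of_nonpos (hsign w hw.2.1 hw.2.2)
      (le_of_lt (hkey w hw.2.1 hw.2.2))
  have hvmem : v ∈ Finset.univ.filter
      (fun w => w ∉ F ∧ IsBdryFace p (insert w F)) := by
    simp [hv, hvF]
  have hzero : lam (insert v F) * l (π F v) = 0 :=
    (Finset.sum_eq_zero_iff_of_nonpos hterm).mp hsum v hvmem
  have hne' : l (π F v) ≠ 0 := ne_of_lt (hkey v hv hvF)
  exact (mul_eq_zero.mp hzero).resolve_right hne'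

end
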